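/- Let K be a number field, γ, m ∈ K, g(x) = (x-γ)² + m + γ, and n ≥ 1. Suppose gⁿ(x) is irreducible over K and g^{n+1}(x) = p₁(x)p₂(x) with p₁, p₂ ∈ K[x] nonconstant. If α is a root of p₁ in an algebraic closure of K, then 2γ - α is not a root of p₁. -/

import Mathlib

open Polynomial IntermediateField

noncomputable def gIter {K : Type*} [Field K] (g : K[X]) : ℕ → K[X]
  | 0 => Polynomial.X
  | n + 1 => g.comp (gIter g n)

private lemma gIter_comp_right {K : Type*} [Field K] (g : K[X]) (n : ℕ) :
    gIter g (n + 1) = (gIter g n).comp g := by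
  induction n with
  | zero => simp [gIter]
  | succ k ih =>
      show g.comp (gIter g (k + 1)) = (g.comp (gIter g k)).comp g
      rw [comp_assoc, ← ih]

private lemma gIter_monic_natDegree {K : Type*} [Field K] {g : K[X]} (hm : g.Monic)
    (h2 : g.natDegree = 2) (n : ℕ) : (gIter g n).Monic ∧ (gIter g n).natDegree = 2 ^ n := by
  induction n with
  | zero => exact ⟨monic_X, by simp [gIter]⟩
  | succ k ih =>
      have h0 : (gIter g k).natDegree ≠ 0 := by
        rw [ih.2]; positivity
      refine ⟨hm.comp ih.1 h0, ?_⟩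
      show (g.comp (gIter g k)).natDegree = 2 ^ (k + 1)
      rw [natDegree_comp, h2, ih.2, pow_succ]
      ring

theorem stmt_4 (K : Type*) [Field K] [NumberField K] (γ m : K) (n : ℕ) (hn : 1 ≤ n)
    (g : K[X]) (hg : g = (X - C γ) ^ 2 + C m + C γ)
    (hirr : Irreducible (gIter g n))
    (p₁ p₂ : K[X]) (hfac : gIter g (n + 1) = p₁ * p₂)
    (hd1 : 0 < p₁.degree) (hd2 : 0 < p₂.degree)
    (α : AlgebraicClosure K) (hα : Polynomial.aeval α p₁ = 0) :
    Polynomial.aeval (2 * algebraMap K (AlgebraicClosure K) γ - α) p₁ ≠ 0 := by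
  intro hα'
  set α' : AlgebraicClosure K := 2 * algebraMap K (AlgebraicClosure K) γ - α with hα'def
  -- basic facts about g
  have h1 : ((X - C γ : K[X]) ^ 2).Monic := (monic_X_sub_C γ).pow 2
  have hdeg1 : ((X - C γ : K[X]) ^ 2).degree = 2 := by
    rw [degree_pow, degree_X_sub_C]; rfl
  have hlt : (C m + C γ : K[X]).degree < ((X - C γ : K[X]) ^ 2).degree := by
    rw [hdeg1]
    refine lt_of_le_of_lt ((degree_add_le _ _).trans (max_le degree_C_le degree_C_le)) ?_
    decide
  have hgm : g.Monic := by
    rw [hg, add_assoc]; exact h1.add_of_left hlt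
  have hg2 : g.natDegree = 2 := by
    have : g.degree = 2 := by
      rw [hg, add_assoc, degree_add_eq_left_of_degree_lt hlt, hdeg1]
    exact natDegree_eq_of_degree_eq_some this
  have HM : ∀ k, (gIter g k).Monic := fun k => (gIter_monic_natDegree hgm hg2 k).1
  have HD : ∀ k, (gIter g k).natDegree = 2 ^ k := fun k => (gIter_monic_natDegree hgm hg2 k).2
  -- nonvanishing factors
  have hne1 : p₁ ≠ 0 := fun h => by simp [h] at hd1
  have hne2 : p₂ ≠ 0 := fun h => by simp [h] at hd2
  have hsum : p₁.natDegree + p₂.natDegree = 2 ^ (n + 1) := by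
    have := congrArg natDegree hfac
    rw [natDegree_mul hne1 hne2, HD (n + 1)] at this
    omega
  -- key degree lower bound for roots of gIter g (n+1)
  have key : ∀ x : (AlgebraicClosure K), aeval x (gIter g (n + 1)) = 0 →
      IsIntegral K x ∧ minpoly K (aeval x g) = gIter g n ∧
      aeval x g ∈ K⟮x⟯ ∧ 2 ^ n ≤ (minpoly K x).natDegree := by
    intro x hx
    have hy : aeval (aeval x g) (gIter g n) = 0 := by
      rw [gIter_comp_right, aeval_comp] at hx; exact hx
    have hxint : IsIntegral K x := Algebra.IsIntegral.isIntegral x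
    have hmin : minpoly K (aeval x g) = gIter g n :=
      (minpoly.eq_of_irreducible_of_monic hirr hy (HM n)).symm
    have hfx : FiniteDimensional K K⟮x⟯ := adjoin.finiteDimensional hxint
    have hmem : aeval x g ∈ K⟮x⟯ :=
      (IntermediateField.algebra_adjoin_le_adjoin K {x})
        (Polynomial.aeval_mem_adjoin_singleton K x)
    refine ⟨hxint, hmin, hmem, ?_⟩
    -- view aeval x g as an element of K⟮x⟯
    set Y : K⟮x⟯ := ⟨aeval x g, hmem⟩ with hY
    have hinj : Function.Injective (algebraMap K⟮x⟯ (AlgebraicClosure K)) := (algebraMap K⟮x⟯ (AlgebraicClosure K)).injective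
    have hmY : minpoly K Y = gIter g n := by
      rw [← hmin]
      have : algebraMap K⟮x⟯ (AlgebraicClosure K) Y = aeval x g := rfl
      rw [← this, minpoly.algebraMap_eq hinj]
    calc 2 ^ n = (minpoly K Y).natDegree := by rw [hmY, HD n]
      _ ≤ Module.finrank K K⟮x⟯ := minpoly.natDegree_le Y
      _ = (minpoly K x).natDegree := adjoin.finrank hxint
  have hroot1 : aeval α (gIter g (n + 1)) = 0 := by
    rw [hfac, map_mul, hα, zero_mul]
  obtain ⟨hαint, hminβ, hmemβ, e1⟩ := key α hroot1
  -- a root of p₂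
  obtain ⟨x₂, hx₂⟩ : ∃ x : (AlgebraicClosure K), aeval x p₂ = 0 := by
    have hmapdeg : (p₂.map (algebraMap K (AlgebraicClosure K))).degree ≠ 0 := by
      rw [degree_map]; exact fun h => by simp [h] at hd2
    obtain ⟨x, hx⟩ := IsAlgClosed.exists_root _ hmapdeg
    exact ⟨x, by rwa [aeval_def, ← eval_map]⟩
  obtain ⟨-, -, -, e2⟩ := key x₂ (by rw [hfac, map_mul, hx₂, mul_zero])
  have d1 : (minpoly K α).natDegree ≤ p₁.natDegree :=
    natDegree_le_of_dvd (minpoly.dvd K α hα) hne1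
  have d2 : (minpoly K x₂).natDegree ≤ p₂.natDegree :=
    natDegree_le_of_dvd (minpoly.dvd K x₂ hx₂) hne2
  have hp1deg : p₁.natDegree = 2 ^ n ∧ (minpoly K α).natDegree = 2 ^ n := by
    have : 2 ^ (n + 1) = 2 ^ n + 2 ^ n := by ring
    omega
  -- p₁ is a constant multiple of the minimal polynomial of α
  have hroot' : aeval α' (minpoly K α) = 0 := by
    obtain ⟨q, hq⟩ := minpoly.dvd K α hα
    have hqne : q ≠ 0 := fun h => hne1 (by rw [hq, h, mul_zero])
    have hmne : minpoly K α ≠ 0 := minpoly.ne_zero hαint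
    have hqdeg : q.natDegree = 0 := by
      have := congrArg natDegree hq
      rw [natDegree_mul hmne hqne] at this
      omega
    obtain ⟨c, rfl⟩ := natDegree_eq_zero.mp hqdeg
    have hcne : (algebraMap K (AlgebraicClosure K)) c ≠ 0 := by
      simpa using fun h => hqne (by rw [h, map_zero])
    have := hα'
    rw [hq, map_mul, aeval_C] at this
    exact (mul_eq_zero.mp this).resolve_right hcne
  -- the embedding sending α to α'
  let φ : K⟮α⟯ →ₐ[K] (AlgebraicClosure K) :=
    (AdjoinRoot.liftAlgHom (minpoly K α) (Algebra.ofId K _) α' hroot').comp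
      (adjoinRootEquivAdjoin K hαint).symm.toAlgHom
  have hφα : φ (AdjoinSimple.gen K α) = α' := by
    simp only [φ, AlgHom.comp_apply, AlgEquiv.toAlgHom_eq_coe, AlgHom.coe_coe,
      adjoinRootEquivAdjoin_symm_apply_gen, AdjoinRoot.liftAlgHom_root,
      AlgEquiv.coe_toAlgHom, AlgEquiv.toAlgHom_apply]
    exact AdjoinRoot.liftAlgHom_root _ _ _ _
  -- β := aeval α g generates the same field
  have hβint : IsIntegral K (aeval α g) := Algebra.IsIntegral.isIntegral _
  have hfα : FiniteDimensional K K⟮α⟯ := adjoin.finiteDimensional hαint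
  have hleβ : K⟮aeval α g⟯ ≤ K⟮α⟯ := by
    rw [adjoin_simple_le_iff]; exact hmemβ
  have heq : K⟮aeval α g⟯ = K⟮α⟯ := by
    refine eq_of_le_of_finrank_le hleβ ?_
    rw [adjoin.finrank hαint, adjoin.finrank hβint, hminβ, HD n, hp1deg.2]
  -- φ fixes β
  have hgen : algebraMap K⟮α⟯ (AlgebraicClosure K) (AdjoinSimple.gen K α) = α := rfl
  have hB : (⟨aeval α g, hmemβ⟩ : K⟮α⟯) = aeval (AdjoinSimple.gen K α) g := by
    apply Subtype.ext
    show aeval α g = algebraMap K⟮α⟯ (AlgebraicClosure K) (aeval (AdjoinSimple.gen K α) g)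
    rw [← aeval_algebraMap_apply, hgen]
  have hαg : aeval α' g = aeval α g := by
    simp only [hg, map_add, map_pow, map_sub, aeval_X, aeval_C, hα'def]
    ring
  have hφB : φ (⟨aeval α g, hmemβ⟩ : K⟮α⟯) = aeval α g := by
    rw [hB, ← aeval_algHom_apply, hφα, hαg]
  -- compare with the inclusion on K⟮β⟯
  let ψ : K⟮aeval α g⟯ →ₐ[K] (AlgebraicClosure K) := φ.comp (equivOfEq heq).toAlgHom
  have hψ : ψ = (K⟮aeval α g⟯).val := by
    apply (adjoin.powerBasis hβint).algHom_ext
    have hgen' : (adjoin.powerBasis hβint).gen = AdjoinSimple.gen K (aeval α g) := rfl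
    rw [hgen']
    have : (equivOfEq heq) (AdjoinSimple.gen K (aeval α g)) =
        (⟨aeval α g, hmemβ⟩ : K⟮α⟯) := by
      apply Subtype.ext
      simp [equivOfEq_apply]
    show φ ((equivOfEq heq) (AdjoinSimple.gen K (aeval α g))) = _
    rw [this, hφB]
    rfl
  -- evaluate at α
  have hmemα : α ∈ K⟮aeval α g⟯ := heq ▸ mem_adjoin_simple_self K α
  have hcast : (equivOfEq heq) (⟨α, hmemα⟩ : K⟮aeval α g⟯) = AdjoinSimple.gen K α := by
    apply Subtype.ext
    simp [equivOfEq_apply]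
  have hαα' : α' = α := by
    have h1 : ψ (⟨α, hmemα⟩ : K⟮aeval α g⟯) = α' := by
      show φ ((equivOfEq heq) (⟨α, hmemα⟩ : K⟮aeval α g⟯)) = α'
      rw [hcast, hφα]
    have h2 : (K⟮aeval α g⟯).val (⟨α, hmemα⟩ : K⟮aeval α g⟯) = α := rfl
    rw [hψ, h2] at h1
    exact h1.symm
  -- conclude: α = algebraMap γ, contradicting degree 2^n ≥ 2
  have hαγ : α = algebraMap K (AlgebraicClosure K) γ := by
    have h2 : (2 : (AlgebraicClosure K)) * algebraMap K (AlgebraicClosure K) γ = 2 * α := by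
      have := hαα'
      rw [hα'def] at this
      linear_combination this
    have h2ne : (2 : (AlgebraicClosure K)) ≠ 0 := two_ne_zero
    exact (mul_left_cancel₀ h2ne h2).symm
  have hmindeg : (minpoly K α).natDegree = 1 := by
    rw [hαγ, minpoly.eq_X_sub_C, natDegree_X_sub_C]
  have : (2:ℕ) ≤ 2 ^ n := by
    calc (2:ℕ) = 2 ^ 1 := rfl
      _ ≤ 2 ^ n := Nat.pow_le_pow_right (by norm_num) hn
  omega
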